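/- arXiv:1409.8670 — 4 statements merged into one kernel-verified Lean document; each statement's English description precedes it below -/
import Mathlib

section
/- Let G = (L, R, E) be a finite bipartite graph in which every vertex of L has degree at least k and every vertex of R has degree at most d, where k ≥ d ≥ 1. Then any maximal matching M of G satisfies |M| ≥ (k/(k+d-1))·|L|. In particular, since the maximum matching has size at most |L|, every maximal matching is a (k/(k+d-1))-approximation of the maximum matching. -/
open Finset

/-- In a `(k,d)`-bounded bipartite graph with `k ≥ d ≥ 1`, every maximal matching `M`
satisfies `|M| ≥ (k/(k+d-1))·|L|`. -/
theorem stmt_2 {L R : Type*} [Fintype L] [Fintype R]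
    (Adj : L → R → Prop) [∀ i j, Decidable (Adj i j)] (k d : ℕ)
    (hd : 1 ≤ d) (hkd : d ≤ k)
    (hL : ∀ i : L, k ≤ (univ.filter (fun j : R => Adj i j)).card)
    (hR : ∀ j : R, (univ.filter (fun i : L => Adj i j)).card ≤ d)
    (M : Finset (L × R))
    (hME : ∀ e ∈ M, Adj e.1 e.2)
    (hM1 : ∀ e ∈ M, ∀ e' ∈ M, e.1 = e'.1 → e = e')
    (hM2 : ∀ e ∈ M, ∀ e' ∈ M, e.2 = e'.2 → e = e')
    (hmax : ∀ i : L, ∀ j : R, Adj i j →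
      (∃ e ∈ M, e.1 = i) ∨ (∃ e ∈ M, e.2 = j)) :
    ((k : ℝ) / (k + d - 1)) * Fintype.card L ≤ M.card := by
  classical
  set U : Finset L := univ.filter (fun i => ¬ ∃ e ∈ M, e.1 = i) with hU
  set MR : Finset R := M.image Prod.snd with hMR
  have hMRcard : MR.card = M.card :=
    Finset.card_image_of_injOn (fun e he e' he' h => hM2 e he e' he' h)
  have hML : (univ.filter (fun i => ∃ e ∈ M, e.1 = i)) = M.image Prod.fst := by
    ext i
    simp [eq_comm]
  have hMLcard : (univ.filter (fun i : L => ∃ e ∈ M, e.1 = i)).card = M.card := by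
    rw [hML]
    exact Finset.card_image_of_injOn (fun e he e' he' h => hM1 e he e' he' h)
  have hMle : M.card ≤ Fintype.card L := by
    rw [← hMLcard]
    exact (Finset.card_filter_le _ _)
  have hUcard : U.card = Fintype.card L - M.card := by
    have := Finset.card_filter_add_card_filter_not
      (s := (univ : Finset L)) (p := fun i => ∃ e ∈ M, e.1 = i)
    rw [← hU] at this
    rw [hMLcard] at this
    have h2 : (univ : Finset L).card = Fintype.card L := rfl
    omega
  -- per unmatched i, all neighbors are in MR
  have hnbr : ∀ i ∈ U, ∀ j : R, Adj i j → j ∈ MR := by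
    intro i hi j hij
    rcases hmax i j hij with ⟨e, he, h1⟩ | ⟨e, he, h2⟩
    · exfalso
      simp only [hU, mem_filter] at hi
      exact hi.2 ⟨e, he, h1⟩
    · exact Finset.mem_image.2 ⟨e, he, h2⟩
  -- per matched j, at most d-1 unmatched neighbors
  have hfib : ∀ j ∈ MR, (U.filter (fun i => Adj i j)).card ≤ d - 1 := by
    intro j hj
    rcases Finset.mem_image.1 hj with ⟨e, he, h2⟩
    have hsub : U.filter (fun i => Adj i j) ⊆
        (univ.filter (fun i : L => Adj i j)).erase e.1 := by
      intro i hi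
      simp only [hU, mem_filter, mem_erase] at hi ⊢
      refine ⟨?_, Finset.mem_univ _, hi.2⟩
      intro hie
      exact hi.1.2 ⟨e, he, hie.symm⟩
    calc (U.filter (fun i => Adj i j)).card
        ≤ ((univ.filter (fun i : L => Adj i j)).erase e.1).card :=
          Finset.card_le_card hsub
      _ ≤ (univ.filter (fun i : L => Adj i j)).card - 1 := by
          apply Nat.le_of_eq
          apply Finset.card_erase_of_mem
          simp only [mem_filter]
          exact ⟨Finset.mem_univ _, h2 ▸ hME e he⟩
      _ ≤ d - 1 := Nat.sub_le_sub_right (hR j) 1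
  -- double counting
  have key : k * U.card ≤ (d - 1) * M.card := by
    calc k * U.card = ∑ _i ∈ U, k := by rw [Finset.sum_const, smul_eq_mul, mul_comm]
      _ ≤ ∑ i ∈ U, (univ.filter (fun j : R => Adj i j)).card :=
          Finset.sum_le_sum (fun i _ => hL i)
      _ = ∑ i ∈ U, ∑ j ∈ univ, (if Adj i j then 1 else 0) := by
          simp only [Finset.card_filter]
      _ = ∑ j ∈ univ, ∑ i ∈ U, (if Adj i j then 1 else 0) := Finset.sum_comm
      _ = ∑ j ∈ univ, (U.filter (fun i => Adj i j)).card := by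
          simp only [Finset.card_filter]
      _ = ∑ j ∈ MR, (U.filter (fun i => Adj i j)).card := by
          refine (Finset.sum_subset (Finset.subset_univ _) ?_).symm
          intro j _ hjMR
          rw [Finset.card_eq_zero]
          refine Finset.filter_eq_empty_iff.2 ?_
          intro i hi hij
          exact hjMR (hnbr i hi j hij)
      _ ≤ ∑ _j ∈ MR, (d - 1) := Finset.sum_le_sum hfib
      _ = (d - 1) * M.card := by rw [Finset.sum_const, smul_eq_mul, hMRcard, mul_comm]
  have hnat : k * Fintype.card L ≤ (k + d - 1) * M.card := by
    rw [hUcard] at key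
    obtain ⟨n, hn⟩ : ∃ n, Fintype.card L = n + M.card ∧ n = Fintype.card L - M.card :=
      ⟨Fintype.card L - M.card, by omega, rfl⟩
    calc k * Fintype.card L = k * n + k * M.card := by rw [hn.1, Nat.mul_add]
      _ ≤ (d - 1) * M.card + k * M.card :=
          Nat.add_le_add_right (by rw [hn.2]; exact key) _
      _ = (k + d - 1) * M.card := by
          rw [← Nat.add_mul]
          congr 1
          omega
  have hc : (0 : ℝ) < (k : ℝ) + d - 1 := by
    have h1 : (1 : ℝ) ≤ (d : ℝ) := by exact_mod_cast hd
    have h2 : (1 : ℝ) ≤ (k : ℝ) := by exact_mod_cast hd.trans hkd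
    linarith
  rw [div_mul_eq_mul_div, div_le_iff₀ hc]
  have hcast : ((k + d - 1 : ℕ) : ℝ) = (k : ℝ) + d - 1 := by
    have : 1 ≤ k + d := by omega
    push_cast [Nat.cast_sub this]
    ring
  calc (k : ℝ) * Fintype.card L = ((k * Fintype.card L : ℕ) : ℝ) := by push_cast; ring
    _ ≤ (((k + d - 1) * M.card : ℕ) : ℝ) := by exact_mod_cast hnat
    _ = (M.card : ℝ) * ((k : ℝ) + d - 1) := by push_cast [hcast]; ring
end

section
/- Let G = (L, R, E) be a finite bipartite graph in which every vertex of L has degree at least k and every vertex of R has degree at most d, where k ≥ 1 and d ≥ 2. Then G has a matching M in which the number of unmatched vertices of L is at most (1 − 1/d)^k · |L|; equivalently, G has a matching of size at least (1 − (1 − 1/d)^k)·|L|. -/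
open Finset

/-- A `(k,d)`-bounded bipartite graph (`k ≥ 1`, `d ≥ 2`, left degrees at least `k`,
right degrees at most `d`) has a matching of size at least `(1 - (1 - 1/d)^k)·|L|`,
equivalently leaving at most `(1 - 1/d)^k·|L|` left vertices unmatched. -/
theorem stmt_11 {L R : Type*} [Fintype L] [Fintype R]
    (Adj : L → R → Prop) [∀ i j, Decidable (Adj i j)] (k d : ℕ)
    (hk : 1 ≤ k) (hd : 2 ≤ d)
    (hL : ∀ i : L, k ≤ (univ.filter (fun j : R => Adj i j)).card)
    (hR : ∀ j : R, (univ.filter (fun i : L => Adj i j)).card ≤ d) :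
    ∃ M : Finset (L × R),
      (∀ e ∈ M, Adj e.1 e.2) ∧
      (∀ e ∈ M, ∀ e' ∈ M, e.1 = e'.1 → e = e') ∧
      (∀ e ∈ M, ∀ e' ∈ M, e.2 = e'.2 → e = e') ∧
      (1 - (1 - 1 / (d : ℝ)) ^ k) * Fintype.card L ≤ M.card := by
  classical
  set r : ℝ := (d : ℝ) / ((d : ℝ) - 1) with hrdef
  have hd2 : (2:ℝ) ≤ (d:ℝ) := by exact_mod_cast hd
  have hdpos : (0:ℝ) < (d:ℝ) - 1 := by linarith
  have hr1 : 1 ≤ r := by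
    rw [hrdef, le_div_iff₀ hdpos]; linarith
  have hrsub : r - 1 = 1 / ((d:ℝ) - 1) := by
    rw [hrdef]; field_simp; ring
  -- main induction over processed right vertices
  have main : ∀ S : Finset R, ∃ M : Finset (L × R),
      (∀ e ∈ M, Adj e.1 e.2 ∧ e.2 ∈ S) ∧
      (∀ e ∈ M, ∀ e' ∈ M, e.1 = e'.1 → e = e') ∧
      (∀ e ∈ M, ∀ e' ∈ M, e.2 = e'.2 → e = e') ∧
      ∑ i ∈ univ.filter (fun i : L => ∀ e ∈ M, e.1 ≠ i),
        r ^ (S.filter (fun j => Adj i j)).card ≤ (Fintype.card L : ℝ) := by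
    intro S
    induction S using Finset.induction_on with
    | empty =>
      refine ⟨∅, by simp, by simp, by simp, ?_⟩
      simp [Finset.card_univ]
    | @insert j S hjS ih =>
      obtain ⟨M, hM1, hM2, hM3, hM4⟩ := ih
      by_cases hU : (univ.filter (fun i : L => Adj i j ∧ ∀ e ∈ M, e.1 ≠ i)).Nonempty
      · -- match j to an unmatched neighbor of maximum seen degree
        obtain ⟨i₀, hi₀U, hi₀max⟩ := Finset.exists_max_image
          (univ.filter (fun i : L => Adj i j ∧ ∀ e ∈ M, e.1 ≠ i))
          (fun i => (S.filter (fun j => Adj i j)).card) hU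
        rw [Finset.mem_filter] at hi₀U
        obtain ⟨-, hadj, hunm⟩ := hi₀U
        refine ⟨insert (i₀, j) M, ?_, ?_, ?_, ?_⟩
        · intro e he
          rcases Finset.mem_insert.mp he with rfl | he
          · exact ⟨hadj, Finset.mem_insert_self _ _⟩
          · exact ⟨(hM1 e he).1, Finset.mem_insert_of_mem (hM1 e he).2⟩
        · intro e he e' he' h1
          rcases Finset.mem_insert.mp he with rfl | he <;>
            rcases Finset.mem_insert.mp he' with rfl | he'
          · rfl
          · exact absurd h1.symm (hunm e' he')
          · exact absurd h1 (hunm e he)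
          · exact hM2 e he e' he' h1
        · intro e he e' he' h2
          rcases Finset.mem_insert.mp he with rfl | he <;>
            rcases Finset.mem_insert.mp he' with rfl | he'
          · rfl
          · exact absurd ((hM1 e' he').2) (h2 ▸ hjS)
          · exact absurd ((hM1 e he).2) (h2.symm ▸ hjS)
          · exact hM3 e he e' he' h2
        · -- potential decrease
          set W : Finset L := univ.filter (fun i : L => ∀ e ∈ M, e.1 ≠ i) with hWdef
          have hi₀W : i₀ ∈ W := Finset.mem_filter.mpr ⟨Finset.mem_univ _, hunm⟩
          have hWnew : univ.filter (fun i : L => ∀ e ∈ insert (i₀, j) M, e.1 ≠ i)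
              = W.erase i₀ := by
            ext i
            simp only [hWdef, Finset.mem_filter, Finset.mem_erase, Finset.mem_univ,
              true_and, Finset.mem_insert]
            constructor
            · intro h
              exact ⟨fun hi => (h (i₀, j) (Or.inl rfl)) hi.symm,
                fun e he => h e (Or.inr he)⟩
            · rintro ⟨hne, h⟩ e he
              rcases he with rfl | he
              · exact fun hh => hne hh.symm
              · exact h e he
          rw [hWnew]
          -- degree change
          have hdeg : ∀ i : L, ((insert j S).filter (fun j' => Adj i j')).card
              = (S.filter (fun j' => Adj i j')).card + (if Adj i j then 1 else 0) := by
            intro i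
            rw [Finset.filter_insert]
            split
            · rw [Finset.card_insert_of_notMem (by simp [hjS])]
            · simp
          set U : Finset L := univ.filter (fun i : L => Adj i j ∧ ∀ e ∈ M, e.1 ≠ i)
            with hUdef
          set D : ℕ := (S.filter (fun j' => Adj i₀ j')).card with hDdef
          have hsplit : ∀ i : L, r ^ ((insert j S).filter (fun j' => Adj i j')).card
              = r ^ (S.filter (fun j' => Adj i j')).card
                + (if Adj i j then r ^ (S.filter (fun j' => Adj i j')).card * (r - 1)
                    else 0) := by
            intro i
            rw [hdeg i]
            split
            · rw [pow_add, pow_one]; ring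
            · simp
          calc ∑ i ∈ W.erase i₀, r ^ ((insert j S).filter (fun j' => Adj i j')).card
              = ∑ i ∈ W.erase i₀, r ^ (S.filter (fun j' => Adj i j')).card
                + ∑ i ∈ (W.erase i₀).filter (fun i => Adj i j),
                    r ^ (S.filter (fun j' => Adj i j')).card * (r - 1) := by
                rw [Finset.sum_filter, ← Finset.sum_add_distrib]
                exact Finset.sum_congr rfl fun i _ => hsplit i
            _ ≤ ∑ i ∈ W.erase i₀, r ^ (S.filter (fun j' => Adj i j')).card
                + r ^ D := by
                gcongr
                have hsub : (W.erase i₀).filter (fun i => Adj i j) = U.erase i₀ := by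
                  ext i
                  simp only [hWdef, hUdef, Finset.mem_filter, Finset.mem_erase,
                    Finset.mem_univ, true_and]
                  tauto
                rw [hsub]
                have hcard : (U.erase i₀).card ≤ d - 1 := by
                  have h1 : U.card ≤ d := by
                    refine le_trans (Finset.card_le_card ?_) (hR j)
                    intro i hi
                    simp only [hUdef, Finset.mem_filter, Finset.mem_univ, true_and] at hi ⊢
                    exact hi.1
                  have hmem : i₀ ∈ U :=
                    Finset.mem_filter.mpr ⟨Finset.mem_univ _, hadj, hunm⟩
                  have h2 := Finset.card_erase_of_mem hmem
                  omega
                have hterm : ∀ i ∈ U.erase i₀,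
                    r ^ (S.filter (fun j' => Adj i j')).card * (r - 1)
                      ≤ r ^ D * (r - 1) := by
                  intro i hi
                  have hle : (S.filter (fun j' => Adj i j')).card ≤ D :=
                    hi₀max i (Finset.mem_of_mem_erase hi)
                  have : r ^ (S.filter (fun j' => Adj i j')).card ≤ r ^ D :=
                    pow_le_pow_right₀ (by linarith) hle
                  nlinarith [this]
                calc ∑ i ∈ U.erase i₀,
                      r ^ (S.filter (fun j' => Adj i j')).card * (r - 1)
                    ≤ (U.erase i₀).card * (r ^ D * (r - 1)) := by
                      rw [← nsmul_eq_mul]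
                      exact Finset.sum_le_card_nsmul _ _ _ hterm
                  _ ≤ ((d : ℝ) - 1) * (r ^ D * (r - 1)) := by
                      have : ((U.erase i₀).card : ℝ) ≤ (d : ℝ) - 1 := by
                        have hd1 : 1 ≤ d := by omega
                        have h2 : ((U.erase i₀).card : ℝ) ≤ ((d - 1 : ℕ) : ℝ) :=
                          Nat.cast_le.mpr hcard
                        rwa [Nat.cast_sub hd1, Nat.cast_one] at h2
                      have h0 : 0 ≤ r ^ D * (r - 1) :=
                        mul_nonneg (pow_nonneg (by linarith) D) (by linarith)
                      exact mul_le_mul_of_nonneg_right this h0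
                  _ = r ^ D := by
                      rw [hrsub]; field_simp
            _ ≤ ∑ i ∈ W, r ^ (S.filter (fun j' => Adj i j')).card := by
                rw [← Finset.add_sum_erase W _ hi₀W]
                rw [← hDdef]; linarith
            _ ≤ (Fintype.card L : ℝ) := hM4
      · -- no unmatched neighbor: keep M
        refine ⟨M, ?_, hM2, hM3, ?_⟩
        · intro e he
          exact ⟨(hM1 e he).1, Finset.mem_insert_of_mem (hM1 e he).2⟩
        · refine le_trans (le_of_eq ?_) hM4
          refine Finset.sum_congr rfl ?_
          intro i hi
          simp only [Finset.mem_filter, Finset.mem_univ, true_and] at hi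
          have hnadj : ¬ Adj i j := by
            intro hadj
            exact hU ⟨i, Finset.mem_filter.mpr ⟨Finset.mem_univ _, hadj, hi⟩⟩
          rw [Finset.filter_insert, if_neg hnadj]
  -- conclude from the invariant at S = univ
  obtain ⟨M, hM1, hM2, hM3, hM4⟩ := main Finset.univ
  refine ⟨M, fun e he => (hM1 e he).1, hM2, hM3, ?_⟩
  set W : Finset L := univ.filter (fun i : L => ∀ e ∈ M, e.1 ≠ i) with hWdef
  -- each unmatched vertex contributes at least r^k
  have hlow : (W.card : ℝ) * r ^ k ≤ (Fintype.card L : ℝ) := by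
    refine le_trans ?_ hM4
    rw [← nsmul_eq_mul]
    refine Finset.card_nsmul_le_sum _ _ _ ?_
    intro i _
    exact pow_le_pow_right₀ (by linarith) (hL i)
  have hrk : (1 - 1/(d:ℝ)) ^ k * r ^ k = 1 := by
    rw [← mul_pow]
    have : (1 - 1/(d:ℝ)) * r = 1 := by
      rw [hrdef]; field_simp
    rw [this, one_pow]
  have hrkpos : (0:ℝ) < r ^ k := pow_pos (by linarith) k
  have hWbound : (W.card : ℝ) ≤ (1 - 1/(d:ℝ)) ^ k * (Fintype.card L : ℝ) := by
    have h1 : (1 - 1/(d:ℝ)) ^ k = (r ^ k)⁻¹ := by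
      field_simp at hrk ⊢
      linarith [hrk]
    rw [h1, ← div_eq_inv_mul, le_div_iff₀ hrkpos]
    linarith [hlow]
  -- |M| = |L| - |W|
  have hinj : Set.InjOn Prod.fst (M : Set (L × R)) := by
    intro e he e' he' h
    exact hM2 e he e' he' h
  have himg : M.image Prod.fst = univ \ W := by
    ext i
    simp only [Finset.mem_image, Finset.mem_sdiff, Finset.mem_univ, true_and,
      hWdef, Finset.mem_filter]
    constructor
    · rintro ⟨e, he, rfl⟩ h
      exact h e he rfl
    · intro h
      push_neg at h
      obtain ⟨e, he, hei⟩ := h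
      exact ⟨e, he, hei⟩
  have hcardM : M.card = Fintype.card L - W.card := by
    rw [← Finset.card_image_of_injOn hinj, himg, Finset.card_sdiff_of_subset (Finset.subset_univ W),
      Finset.card_univ]
  have hWle : W.card ≤ Fintype.card L := Finset.card_le_card (Finset.subset_univ W) |>.trans
    (by rw [Finset.card_univ])
  have hMreal : (M.card : ℝ) = (Fintype.card L : ℝ) - (W.card : ℝ) := by
    rw [hcardM, Nat.cast_sub hWle]
  rw [hMreal]
  nlinarith [hWbound]
end

section
/- Let G = (L, R, E) be a finite bipartite graph, let c > 1 be a real number, and suppose every vertex of L has degree at least (ln c)·d while every vertex of R has degree at most d, for some integer d ≥ 2. Then G has a matching in which at least a (1 − 1/c)-fraction of the vertices of L are matched. -/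
open Finset

/-- Structural corollary: if every left vertex has degree at least `(ln c)·d` and every
right vertex has degree at most `d`, for a real `c > 1` and an integer `d ≥ 2`, then
the graph has a matching covering at least a `(1 - 1/c)`-fraction of the left side. -/
theorem stmt_12 {L R : Type*} [Fintype L] [Fintype R]
    (Adj : L → R → Prop) [∀ i j, Decidable (Adj i j)] (c : ℝ) (d : ℕ)
    (hc : 1 < c) (hd : 2 ≤ d)
    (hL : ∀ i : L, Real.log c * d ≤ ((univ.filter (fun j : R => Adj i j)).card : ℝ))
    (hR : ∀ j : R, (univ.filter (fun i : L => Adj i j)).card ≤ d) :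
    ∃ M : Finset (L × R),
      (∀ e ∈ M, Adj e.1 e.2) ∧
      (∀ e ∈ M, ∀ e' ∈ M, e.1 = e'.1 → e = e') ∧
      (∀ e ∈ M, ∀ e' ∈ M, e.2 = e'.2 → e = e') ∧
      (1 - 1 / c) * Fintype.card L ≤ M.card := by
  classical
  have hc0 : (0:ℝ) < c := lt_trans one_pos hc
  have hlc0 : (0:ℝ) ≤ Real.log c := Real.log_nonneg hc.le
  have hinvc : 1 - Real.log c ≤ 1 / c := by
    have h := Real.log_le_sub_one_of_pos (x := 1/c) (by positivity)
    rw [Real.log_div one_ne_zero (ne_of_gt hc0), Real.log_one] at h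
    linarith
  set nbr : L → Finset R := fun i => univ.filter (fun j => Adj i j) with hnbr
  set nL : ℕ := Fintype.card L with hnL
  -- key deficiency bound
  have key : ∀ S : Finset L, ((S.card - (S.biUnion nbr).card : ℕ) : ℝ) ≤ nL / c := by
    intro S
    have hdc : Real.log c * S.card ≤ ((S.biUnion nbr).card : ℝ) := by
      have h1 : (S.card : ℝ) * (Real.log c * d) ≤ ∑ i ∈ S, ((nbr i).card : ℝ) :=
        calc (S.card : ℝ) * (Real.log c * d) = ∑ _i ∈ S, Real.log c * d := by
              rw [Finset.sum_const, nsmul_eq_mul]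
          _ ≤ ∑ i ∈ S, ((nbr i).card : ℝ) := Finset.sum_le_sum fun i _ => hL i
      have h2 : (∑ i ∈ S, (nbr i).card) ≤ (S.biUnion nbr).card * d := by
        calc ∑ i ∈ S, (nbr i).card
            = ∑ i ∈ S, ∑ j : R, if Adj i j then 1 else 0 := by
              simp only [hnbr, Finset.card_filter]
          _ = ∑ j : R, ∑ i ∈ S, if Adj i j then 1 else 0 := Finset.sum_comm
          _ = ∑ j : R, (S.filter (fun i => Adj i j)).card := by
              simp only [Finset.card_filter]
          _ ≤ ∑ j : R, if j ∈ S.biUnion nbr then d else 0 := by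
              apply Finset.sum_le_sum
              intro j _
              by_cases hj : j ∈ S.biUnion nbr
              · simp only [hj, if_true]
                exact le_trans (Finset.card_le_card
                  (Finset.filter_subset_filter _ (Finset.subset_univ S))) (hR j)
              · simp only [hj, if_false, Nat.le_zero, Finset.card_eq_zero,
                  Finset.filter_eq_empty_iff]
                intro i hi hadj
                exact hj (Finset.mem_biUnion.mpr ⟨i, hi, by simp [hnbr, hadj]⟩)
          _ = (S.biUnion nbr).card * d := by
              rw [Finset.sum_ite_mem, Finset.univ_inter, Finset.sum_const, smul_eq_mul]
      have h2' : (∑ i ∈ S, ((nbr i).card : ℝ)) ≤ ((S.biUnion nbr).card : ℝ) * d := by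
        exact_mod_cast h2
      have hd0 : (0:ℝ) < d := by
        have : (2:ℝ) ≤ d := by exact_mod_cast hd
        linarith
      have h3 : (S.card : ℝ) * (Real.log c * d) ≤ ((S.biUnion nbr).card : ℝ) * d :=
        le_trans h1 h2'
      nlinarith
    rcases le_or_gt S.card ((S.biUnion nbr).card) with h | h
    · rw [Nat.sub_eq_zero_of_le h]; push_cast; positivity
    · have hcast : ((S.card - (S.biUnion nbr).card : ℕ) : ℝ)
          = (S.card : ℝ) - ((S.biUnion nbr).card : ℝ) := by
        rw [Nat.cast_sub h.le]
      rw [hcast]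
      have hSle : (S.card : ℝ) ≤ nL := by
        exact_mod_cast Finset.card_le_card (Finset.subset_univ S)
      have hS0 : (0:ℝ) ≤ S.card := Nat.cast_nonneg _
      have h1c : (0:ℝ) ≤ 1 / c := by positivity
      have step1 : (S.card : ℝ) - ((S.biUnion nbr).card : ℝ)
          ≤ (S.card : ℝ) * (1 - Real.log c) := by nlinarith
      have step2 : (S.card : ℝ) * (1 - Real.log c) ≤ (S.card : ℝ) * (1 / c) :=
        mul_le_mul_of_nonneg_left hinvc hS0
      have step3 : (S.card : ℝ) * (1 / c) ≤ (nL : ℝ) * (1 / c) :=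
        mul_le_mul_of_nonneg_right hSle h1c
      calc (S.card : ℝ) - ((S.biUnion nbr).card : ℝ)
          ≤ (nL : ℝ) * (1 / c) := le_trans step1 (le_trans step2 step3)
        _ = nL / c := by ring
  -- maximum deficiency
  set D : ℕ := (univ : Finset L).powerset.sup
    (fun S => S.card - (S.biUnion nbr).card) with hD
  have hD1 : ∀ S : Finset L, S.card ≤ (S.biUnion nbr).card + D := by
    intro S
    have := Finset.le_sup (f := fun S : Finset L => S.card - (S.biUnion nbr).card)
      (Finset.mem_powerset.mpr (Finset.subset_univ S))
    have h' : S.card - (S.biUnion nbr).card ≤ D := this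
    omega
  have hD2 : (D : ℝ) ≤ nL / c := by
    obtain ⟨S0, -, hS0⟩ := Finset.exists_mem_eq_sup (univ : Finset L).powerset
      ⟨∅, Finset.mem_powerset.mpr (Finset.empty_subset _)⟩
      (fun S => S.card - (S.biUnion nbr).card)
    rw [hD, hS0]
    exact key S0
  -- Hall's theorem with D dummy vertices
  set t : L → Finset (R ⊕ Fin D) :=
    fun i => (nbr i).image Sum.inl ∪ (univ : Finset (Fin D)).image Sum.inr with ht
  have hall : ∀ s : Finset L, s.card ≤ (s.biUnion t).card := by
    intro s
    rcases s.eq_empty_or_nonempty with rfl | ⟨i0, hi0⟩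
    · simp
    · have hsub : (s.biUnion nbr).image Sum.inl ∪ (univ : Finset (Fin D)).image Sum.inr
          ⊆ s.biUnion t := by
        apply Finset.union_subset
        · intro x hx
          simp only [Finset.mem_image, Finset.mem_biUnion] at hx
          obtain ⟨j, ⟨i, hi, hj⟩, rfl⟩ := hx
          exact Finset.mem_biUnion.mpr ⟨i, hi, Finset.mem_union_left _
            (Finset.mem_image_of_mem _ hj)⟩
        · intro x hx
          exact Finset.mem_biUnion.mpr ⟨i0, hi0, Finset.mem_union_right _ hx⟩
      have hdisj : Disjoint ((s.biUnion nbr).image Sum.inl)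
          ((univ : Finset (Fin D)).image Sum.inr) := by
        simp [Finset.disjoint_left]
      have hcard : ((s.biUnion nbr).image Sum.inl ∪
          (univ : Finset (Fin D)).image Sum.inr).card = (s.biUnion nbr).card + D := by
        rw [Finset.card_union_of_disjoint hdisj,
          Finset.card_image_of_injective _ Sum.inl_injective,
          Finset.card_image_of_injective _ Sum.inr_injective, Finset.card_univ,
          Fintype.card_fin]
      calc s.card ≤ (s.biUnion nbr).card + D := hD1 s
        _ = _ := hcard.symm
        _ ≤ (s.biUnion t).card := Finset.card_le_card hsub
  obtain ⟨f, hfinj, hft⟩ := (Finset.all_card_le_biUnion_card_iff_exists_injective t).mp hall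
  -- the matching
  refine ⟨univ.filter (fun p : L × R => f p.1 = Sum.inl p.2), ?_, ?_, ?_, ?_⟩
  · intro e he
    simp only [Finset.mem_filter, Finset.mem_univ, true_and] at he
    have := hft e.1
    rw [he] at this
    simp only [ht, Finset.mem_union, Finset.mem_image] at this
    rcases this with ⟨j, hj, hj2⟩ | ⟨x, -, hx⟩
    · obtain rfl : j = e.2 := Sum.inl_injective hj2
      simpa [hnbr] using hj
    · exact absurd hx (by simp)
  · intro e he e' he' h12
    simp only [Finset.mem_filter, Finset.mem_univ, true_and] at he he'
    rw [h12, he'] at he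
    exact Prod.ext h12 (Sum.inl_injective he).symm
  · intro e he e' he' h12
    simp only [Finset.mem_filter, Finset.mem_univ, true_and] at he he'
    rw [h12, ← he'] at he
    exact Prod.ext (hfinj he) h12
  · -- cardinality
    set A : Finset L := univ.filter (fun i => (f i).isLeft) with hA
    set B : Finset L := univ.filter (fun i => (f i).isRight) with hB
    have hAM : A.card ≤ (univ.filter (fun p : L × R => f p.1 = Sum.inl p.2)).card := by
      apply Finset.card_le_card_of_surjOn Prod.fst
      intro i hi
      simp only [Finset.coe_filter, Set.mem_setOf_eq, Finset.mem_univ, true_and, hA] at hi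
      obtain ⟨j, hj⟩ := Sum.isLeft_iff.mp hi
      exact ⟨(i, j), by simp [hj], rfl⟩
    have hBD : B.card ≤ D := by
      have himg : B.image f ⊆ (univ : Finset (Fin D)).image Sum.inr := by
        intro x hx
        simp only [Finset.mem_image, hB, Finset.mem_filter, Finset.mem_univ, true_and] at hx
        obtain ⟨i, hi, rfl⟩ := hx
        obtain ⟨y, hy⟩ := Sum.isRight_iff.mp hi
        exact Finset.mem_image.mpr ⟨y, Finset.mem_univ _, hy.symm⟩
      calc B.card = (B.image f).card := (Finset.card_image_of_injective _ hfinj).symm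
        _ ≤ ((univ : Finset (Fin D)).image Sum.inr).card := Finset.card_le_card himg
        _ = D := by rw [Finset.card_image_of_injective _ Sum.inr_injective,
            Finset.card_univ, Fintype.card_fin]
    have hAB : A.card + B.card = nL := by
      have : B = univ.filter (fun i => ¬ (f i).isLeft) := by
        ext i; simp [hB, Sum.not_isLeft]
      rw [this, Finset.card_filter_add_card_filter_not, Finset.card_univ]
    have hABr : (A.card : ℝ) = (nL : ℝ) - B.card := by
      have := hAB; push_cast [← this]; ring
    have hBr : (B.card : ℝ) ≤ nL / c := le_trans (by exact_mod_cast hBD) hD2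
    have : (1 - 1 / c) * (nL : ℝ) ≤ A.card := by
      rw [hABr]
      have : (nL:ℝ) / c = (1/c) * nL := by ring
      nlinarith
    calc (1 - 1 / c) * (Fintype.card L : ℝ) ≤ (A.card : ℝ) := this
      _ ≤ _ := by exact_mod_cast hAM
end

section
/- Let d ≥ 2, k ≥ 1 be integers, q = d/(d−1), C = 1/(q^k − 1). Consider nonnegative reals z_1, …, z_m with m ≤ d, each of the form z_i = C·(q^{t_i} − 1) with 0 ≤ t_i ≤ k, and weights B_1, …, B_m > 0. Let i* maximize z_i·B_i + C·B_i over 1 ≤ i ≤ m. Then (1 − z_{i*})·B_{i*} + ∑_{i ≠ i*} (1/(d−1))·(z_i + C)·B_i ≤ (1 + C)·B_{i*}. -/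
open Finset

/-- Per-step primal-dual charging inequality: an online vertex with `m ≤ d` unmatched
neighbors with weights `B i > 0` and dual values `z i = C·(q^{t i} - 1)`, `t i ≤ k`,
matched to the neighbor `i*` maximizing `(z i + C)·B i`, incurs total weighted dual
increase `(1 - z i*)·B i* + ∑_{i ≠ i*} (z i + C)·B i/(d-1)` at most `(1 + C)·B i*`. -/
theorem stmt_18 (d k m : ℕ) (hd : 2 ≤ d) (hk : 1 ≤ k) (hm : m ≤ d)
    (q : ℝ) (hq : q = (d : ℝ) / ((d : ℝ) - 1))
    (C : ℝ) (hC : C = 1 / (q ^ k - 1))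
    (z B : Fin m → ℝ) (t : Fin m → ℕ)
    (hB : ∀ i, 0 < B i) (ht : ∀ i, t i ≤ k)
    (hz : ∀ i, z i = C * (q ^ (t i) - 1))
    (istar : Fin m)
    (hstar : ∀ i, z i * B i + C * B i ≤ z istar * B istar + C * B istar) :
    (1 - z istar) * B istar +
      ∑ i ∈ univ.erase istar, (1 / ((d : ℝ) - 1)) * (z i + C) * B i ≤
    (1 + C) * B istar := by
  have hd1 : (1 : ℝ) ≤ (d : ℝ) - 1 := by
    have : (2 : ℝ) ≤ (d : ℝ) := by exact_mod_cast hd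
    linarith
  have hd0 : (0 : ℝ) < (d : ℝ) - 1 := by linarith
  have hq1 : 1 < q := by
    rw [hq, lt_div_iff₀ hd0]; linarith
  have hqk : 1 < q ^ k := one_lt_pow₀ hq1 (by omega)
  have hCpos : 0 < C := by
    rw [hC]
    have h : 0 < q ^ k - 1 := by linarith
    positivity
  have hz0 : ∀ i, 0 ≤ z i := by
    intro i
    rw [hz]
    have : (1 : ℝ) ≤ q ^ (t i) := one_le_pow₀ hq1.le
    nlinarith
  have hBs : 0 < B istar := hB istar
  have hzC : 0 ≤ (z istar + C) * B istar := by nlinarith [hz0 istar, hBs]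
  have key : ∑ i ∈ univ.erase istar, (1 / ((d : ℝ) - 1)) * (z i + C) * B i
      ≤ (z istar + C) * B istar := by
    have hcard : (univ.erase istar).card = m - 1 := by
      simp [Finset.card_erase_of_mem]
    calc ∑ i ∈ univ.erase istar, (1 / ((d : ℝ) - 1)) * (z i + C) * B i
        ≤ ∑ i ∈ univ.erase istar, (1 / ((d : ℝ) - 1)) * ((z istar + C) * B istar) := by
          apply Finset.sum_le_sum
          intro i _
          have := hstar i
          have h1 : (z i + C) * B i ≤ (z istar + C) * B istar := by nlinarith
          have h2 : (0 : ℝ) ≤ 1 / ((d : ℝ) - 1) := by positivity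
          calc (1 / ((d : ℝ) - 1)) * (z i + C) * B i
              = (1 / ((d : ℝ) - 1)) * ((z i + C) * B i) := by ring
            _ ≤ (1 / ((d : ℝ) - 1)) * ((z istar + C) * B istar) :=
                mul_le_mul_of_nonneg_left h1 h2
      _ = ((m : ℝ) - 1) * ((1 / ((d : ℝ) - 1)) * ((z istar + C) * B istar)) := by
          rw [Finset.sum_const, hcard, nsmul_eq_mul]
          have hm1 : 1 ≤ m := by
            rcases Nat.eq_zero_or_pos m with h | h
            · exact absurd istar.2 (by omega)
            · exact h
          have : ((m - 1 : ℕ) : ℝ) = (m : ℝ) - 1 := by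
            push_cast [hm1]; ring
          rw [this]
      _ ≤ (z istar + C) * B istar := by
          have hmd : (m : ℝ) - 1 ≤ (d : ℝ) - 1 := by
            have : (m : ℝ) ≤ (d : ℝ) := by exact_mod_cast hm
            linarith
          rw [mul_comm, mul_assoc]
          have : (1 / ((d : ℝ) - 1)) * ((m : ℝ) - 1) ≤ 1 := by
            rw [div_mul_eq_mul_div, one_mul, div_le_one hd0]; exact hmd
          nlinarith [this, hzC]
  nlinarith [key]
end
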